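/- arXiv:2504.18356 — 2 statements merged into one kernel-verified Lean document; each statement's English description precedes it below -/
import Mathlib

section
/- Let Λ > 0, κ > 0, α ∈ ℝ, and for n ∈ ℤ set αₙ = α + 2πn/Λ. Let I ⊆ ℝ be an open interval and let p : ℝ × I → ℂ be twice continuously differentiable, satisfy the Helmholtz equation Δp + κ² p = 0 on ℝ × I, and be α-quasi-periodic: p(x + Λ, y) = e^{iαΛ} p(x, y) for all x ∈ ℝ, y ∈ I. Define the n-th Fourier coefficient p̂ₙ(y) = (1/Λ) ∫₀^Λ p(x, y) e^{−i αₙ x} dx. Then for every n ∈ ℤ and every y ∈ I, p̂ₙ is twice differentiable and p̂ₙ''(y) + (κ² − αₙ²) p̂ₙ(y) = 0. -/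
noncomputable section

/-- Partial derivative in the first (x) variable. -/
def pdx (p : ℝ × ℝ → ℂ) (z : ℝ × ℝ) : ℂ := deriv (fun x => p (x, z.2)) z.1

/-- Partial derivative in the second (y) variable. -/
def pdy (p : ℝ × ℝ → ℂ) (z : ℝ × ℝ) : ℂ := deriv (fun y => p (z.1, y)) z.2

/-- Laplacian of a scalar function. -/
def lap (p : ℝ × ℝ → ℂ) (z : ℝ × ℝ) : ℂ := pdx (pdx p) z + pdy (pdy p) z

/-- Gradient of a scalar function. -/
def grad (p : ℝ × ℝ → ℂ) (z : ℝ × ℝ) : ℂ × ℂ := (pdx p z, pdy p z)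

/-- Vector curl of a scalar function: `curl p = (∂_y p, −∂ₓ p)`. -/
def vcurl (p : ℝ × ℝ → ℂ) (z : ℝ × ℝ) : ℂ × ℂ := (pdy p z, -pdx p z)

/-- Divergence of a vector field. -/
def div2 (u : ℝ × ℝ → ℂ × ℂ) (z : ℝ × ℝ) : ℂ :=
  pdx (fun w => (u w).1) z + pdy (fun w => (u w).2) z

/-- Componentwise vector Laplacian. -/
def vecLap (u : ℝ × ℝ → ℂ × ℂ) (z : ℝ × ℝ) : ℂ × ℂ :=
  (lap (fun w => (u w).1) z, lap (fun w => (u w).2) z)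

open MeasureTheory Set

lemma hasDerivAt_sliceY (q : ℝ × ℝ → ℂ) (x₀ y₀ : ℝ) (h : DifferentiableAt ℝ q (x₀, y₀)) :
    HasDerivAt (fun y => q (x₀, y)) (fderiv ℝ q (x₀, y₀) (0, 1)) y₀ := by
  have h1 : HasDerivAt (fun y : ℝ => ((x₀, y) : ℝ × ℝ)) ((0 : ℝ), (1 : ℝ)) y₀ :=
    (hasDerivAt_const y₀ x₀).prodMk (hasDerivAt_id y₀)
  exact h.hasFDerivAt.comp_hasDerivAt y₀ h1

lemma hasDerivAt_sliceX (q : ℝ × ℝ → ℂ) (x₀ y₀ : ℝ) (h : DifferentiableAt ℝ q (x₀, y₀)) :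
    HasDerivAt (fun x => q (x, y₀)) (fderiv ℝ q (x₀, y₀) (1, 0)) x₀ := by
  have h1 : HasDerivAt (fun x : ℝ => ((x, y₀) : ℝ × ℝ)) ((1 : ℝ), (0 : ℝ)) x₀ :=
    (hasDerivAt_id x₀).prodMk (hasDerivAt_const x₀ y₀)
  exact h.hasFDerivAt.comp_hasDerivAt x₀ h1

lemma hasDerivAt_param_integral (a b Λ : ℝ) (q : ℝ × ℝ → ℂ)
    (hq : ContDiffOn ℝ 1 q (Set.univ ×ˢ Set.Ioo a b)) (y₀ : ℝ) (hy₀ : y₀ ∈ Set.Ioo a b) :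
    HasDerivAt (fun y => ∫ x in (0:ℝ)..Λ, q (x, y))
      (∫ x in (0:ℝ)..Λ, fderiv ℝ q (x, y₀) (0, 1)) y₀ := by
  have hU : IsOpen ((Set.univ : Set ℝ) ×ˢ Set.Ioo a b) := isOpen_univ.prod isOpen_Ioo
  have hmem : ∀ x y, y ∈ Set.Ioo a b → ((x, y) : ℝ × ℝ) ∈ (Set.univ : Set ℝ) ×ˢ Set.Ioo a b :=
    fun x y hy => ⟨Set.mem_univ _, hy⟩
  have hdiff : ∀ x y, y ∈ Set.Ioo a b → DifferentiableAt ℝ q (x, y) := fun x y hy =>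
    ((hq.differentiableOn one_ne_zero) (x,y) (hmem x y hy)).differentiableAt (hU.mem_nhds (hmem x y hy))
  set ε := min (y₀ - a) (b - y₀) / 2 with hεdef
  have hε : 0 < ε := by
    have h1 := hy₀.1; have h2 := hy₀.2
    have := lt_min (by linarith : (0:ℝ) < y₀ - a) (by linarith : (0:ℝ) < b - y₀)
    positivity
  have hIcc : Set.Icc (y₀ - ε) (y₀ + ε) ⊆ Set.Ioo a b := by
    intro t ht
    have h1 := min_le_left (y₀ - a) (b - y₀)
    have h2 := min_le_right (y₀ - a) (b - y₀)
    have h3 := hy₀.1; have h4 := hy₀.2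
    constructor
    · have := ht.1; simp only [hεdef] at this ⊢; linarith
    · have := ht.2; simp only [hεdef] at this ⊢; linarith
  have hball : Metric.ball y₀ ε ⊆ Set.Icc (y₀ - ε) (y₀ + ε) := by
    rw [Real.ball_eq_Ioo]; exact Set.Ioo_subset_Icc_self
  -- continuity of the partial derivative
  have hDqc : ContinuousOn (fun z => fderiv ℝ q z ((0:ℝ), (1:ℝ)))
      (Set.univ ×ˢ Set.Ioo a b) :=
    (hq.continuousOn_fderiv_of_isOpen hU le_rfl).clm_apply continuousOn_const
  have hK : IsCompact ((Set.uIcc (0:ℝ) Λ) ×ˢ Set.Icc (y₀ - ε) (y₀ + ε)) :=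
    isCompact_uIcc.prod isCompact_Icc
  have hKU : (Set.uIcc (0:ℝ) Λ) ×ˢ Set.Icc (y₀ - ε) (y₀ + ε) ⊆ Set.univ ×ˢ Set.Ioo a b :=
    Set.prod_mono (Set.subset_univ _) hIcc
  obtain ⟨M, hM⟩ := hK.exists_bound_of_continuousOn (hDqc.mono hKU)
  have hslice : ∀ y, y ∈ Set.Ioo a b → Continuous (fun x => q (x, y)) := by
    intro y hy
    exact hq.continuousOn.comp_continuous (continuous_id.prodMk continuous_const)
      (fun x => hmem x y hy)
  have hsliceD : Continuous (fun x => fderiv ℝ q (x, y₀) ((0:ℝ),(1:ℝ))) :=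
    hDqc.comp_continuous (continuous_id.prodMk continuous_const) (fun x => hmem x y₀ hy₀)
  have key := intervalIntegral.hasDerivAt_integral_of_dominated_loc_of_deriv_le
    (F := fun y x => q (x, y)) (F' := fun y x => fderiv ℝ q (x, y) ((0:ℝ),(1:ℝ)))
    (x₀ := y₀) (s := Metric.ball y₀ ε) (bound := fun _ => M) (a := (0:ℝ)) (b := Λ) (μ := volume)
    (Metric.ball_mem_nhds y₀ hε)
    ?_ ?_ ?_ ?_ ?_ ?_
  · exact key.2
  · filter_upwards [isOpen_Ioo.mem_nhds hy₀] with y hy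
    exact ((hslice y hy).aestronglyMeasurable).restrict
  · exact ((hslice y₀ hy₀).intervalIntegrable 0 Λ)
  · exact hsliceD.aestronglyMeasurable.restrict
  · refine Filter.Eventually.of_forall (fun x hx y hy => ?_)
    exact hM _ ⟨Set.uIoc_subset_uIcc hx, hball hy⟩
  · exact intervalIntegrable_const
  · refine Filter.Eventually.of_forall (fun x hx y hy => ?_)
    exact hasDerivAt_sliceY q x y (hdiff x y (hIcc (hball hy)))


open intervalIntegral in
/-- Fourier coefficients of an α-quasi-periodic Helmholtz solution satisfy the
ODE `p̂ₙ'' + (κ² − αₙ²) p̂ₙ = 0` on the interval `I = (a,b)`. -/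
theorem fourier_mode_ode (Λ κ α : ℝ) (hΛ : 0 < Λ) (hκ : 0 < κ)
    (a b : ℝ) (p : ℝ × ℝ → ℂ)
    (hp : ContDiffOn ℝ 2 p (Set.univ ×ˢ Set.Ioo a b))
    (hHelm : ∀ z : ℝ × ℝ, z.2 ∈ Set.Ioo a b → lap p z + (κ : ℂ) ^ 2 * p z = 0)
    (hqp : ∀ x : ℝ, ∀ y ∈ Set.Ioo a b,
      p (x + Λ, y) = Complex.exp (Complex.I * α * Λ) * p (x, y))
    (αn : ℤ → ℝ) (hαn : ∀ n : ℤ, αn n = α + 2 * Real.pi * n / Λ)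
    (phat : ℤ → ℝ → ℂ)
    (hphat : ∀ n : ℤ, ∀ y : ℝ, phat n y
      = (1 / (Λ : ℂ)) * ∫ x in (0 : ℝ)..Λ, p (x, y) * Complex.exp (-Complex.I * (αn n) * x)) :
    ∀ n : ℤ, ∀ y ∈ Set.Ioo a b,
      DifferentiableAt ℝ (phat n) y ∧
      DifferentiableAt ℝ (deriv (phat n)) y ∧
      deriv (deriv (phat n)) y + ((κ : ℂ) ^ 2 - ((αn n : ℝ) : ℂ) ^ 2) * phat n y = 0 := by
  intro n y₀ hy₀
  have hU : IsOpen ((Set.univ : Set ℝ) ×ˢ Set.Ioo a b) := isOpen_univ.prod isOpen_Ioo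
  have hmem : ∀ x y, y ∈ Set.Ioo a b → ((x, y) : ℝ × ℝ) ∈ (Set.univ : Set ℝ) ×ˢ Set.Ioo a b :=
    fun x y hy => ⟨Set.mem_univ _, hy⟩
  have hdiffOf : ∀ (r : ℝ × ℝ → ℂ), ContDiffOn ℝ 1 r (Set.univ ×ˢ Set.Ioo a b) →
      ∀ x y, y ∈ Set.Ioo a b → DifferentiableAt ℝ r (x, y) := fun r hr x y hy =>
    ((hr.differentiableOn one_ne_zero) (x, y) (hmem x y hy)).differentiableAt
      (hU.mem_nhds (hmem x y hy))
  have hdiffp := hdiffOf p (hp.of_le (by norm_num))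
  -- the exponential multiplier
  set m : ℂ := -Complex.I * ((αn n : ℝ) : ℂ) with hmdef
  set e : ℝ → ℂ := fun x : ℝ => Complex.exp (-Complex.I * (αn n) * (x : ℝ)) with hedef
  have heval : ∀ x : ℝ, e x = Complex.exp (m * x) := fun x => rfl
  have he : ∀ x : ℝ, HasDerivAt e (m * e x) x := by
    intro x
    have h1 : HasDerivAt (fun x : ℝ => m * (x : ℂ)) m x := by
      simpa using (Complex.ofRealCLM.hasDerivAt (x := x)).const_mul m
    have h2 := h1.cexp
    rw [show m * e x = Complex.exp (m * x) * m from by rw [heval]; ring]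
    exact h2
  have hm2 : m * m = -(((αn n : ℝ) : ℂ)) ^ 2 := by
    rw [hmdef]; ring_nf; rw [Complex.I_sq]; ring
  have he_cd : ContDiff ℝ 2 e := by
    have h1 : ContDiff ℝ 2 (fun x : ℝ => m * (x : ℂ)) :=
      contDiff_const.mul Complex.ofRealCLM.contDiff
    exact (Complex.contDiff_exp (𝕜 := ℝ)).comp h1
  -- partial derivatives as fderiv applications
  set f1 : ℝ × ℝ → ℂ := fun z => fderiv ℝ p z (0, 1) with hf1def
  set g1 : ℝ × ℝ → ℂ := fun z => fderiv ℝ p z (1, 0) with hg1def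
  set f2 : ℝ × ℝ → ℂ := fun z => fderiv ℝ f1 z (0, 1) with hf2def
  set g2 : ℝ × ℝ → ℂ := fun z => fderiv ℝ g1 z (1, 0) with hg2def
  have hf1c : ContDiffOn ℝ 1 f1 (Set.univ ×ˢ Set.Ioo a b) :=
    (hp.fderiv_of_isOpen hU (by norm_num)).clm_apply contDiffOn_const
  have hg1c : ContDiffOn ℝ 1 g1 (Set.univ ×ˢ Set.Ioo a b) :=
    (hp.fderiv_of_isOpen hU (by norm_num)).clm_apply contDiffOn_const
  have hdifff1 := hdiffOf f1 hf1c
  have hdiffg1 := hdiffOf g1 hg1c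
  -- identify pdy∘pdy and pdx∘pdx with f2, g2 on the open strip
  have hpdy : ∀ x y, y ∈ Set.Ioo a b → pdy p (x, y) = f1 (x, y) := fun x y hy =>
    (hasDerivAt_sliceY p x y (hdiffp x y hy)).deriv
  have hpdx : ∀ x y, y ∈ Set.Ioo a b → pdx p (x, y) = g1 (x, y) := fun x y hy =>
    (hasDerivAt_sliceX p x y (hdiffp x y hy)).deriv
  have hpdy2 : ∀ x y, y ∈ Set.Ioo a b → pdy (pdy p) (x, y) = f2 (x, y) := by
    intro x y hy
    have hev : (fun Y => pdy p (x, Y)) =ᶠ[nhds y] fun Y => f1 (x, Y) := by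
      filter_upwards [isOpen_Ioo.mem_nhds hy] with Y hY using hpdy x Y hY
    show deriv (fun Y => pdy p (x, Y)) y = f2 (x, y)
    rw [hev.deriv_eq]
    exact (hasDerivAt_sliceY f1 x y (hdifff1 x y hy)).deriv
  have hpdx2 : ∀ x y, y ∈ Set.Ioo a b → pdx (pdx p) (x, y) = g2 (x, y) := by
    intro x y hy
    have hev : (fun X => pdx p (X, y)) =ᶠ[nhds x] fun X => g1 (X, y) := by
      filter_upwards [] with X using hpdx X y hy
    show deriv (fun X => pdx p (X, y)) x = g2 (x, y)
    rw [hev.deriv_eq]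
    exact (hasDerivAt_sliceX g1 x y (hdiffg1 x y hy)).deriv
  have hHelm' : ∀ x y, y ∈ Set.Ioo a b →
      f2 (x, y) = -g2 (x, y) - (κ : ℂ) ^ 2 * p (x, y) := by
    intro x y hy
    have h := hHelm (x, y) hy
    rw [lap] at h
    rw [hpdy2 x y hy, hpdx2 x y hy] at h
    linear_combination h
  -- the integrand q and its y-derivatives
  set q : ℝ × ℝ → ℂ := fun z => p z * e z.1 with hqdef
  have hqc : ContDiffOn ℝ 2 q (Set.univ ×ˢ Set.Ioo a b) :=
    hp.mul (he_cd.comp contDiff_fst).contDiffOn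
  set Dq : ℝ × ℝ → ℂ := fun z => fderiv ℝ q z (0, 1) with hDqdef
  set D2q : ℝ × ℝ → ℂ := fun z => fderiv ℝ Dq z (0, 1) with hD2qdef
  have hDqc : ContDiffOn ℝ 1 Dq (Set.univ ×ˢ Set.Ioo a b) :=
    (hqc.fderiv_of_isOpen hU (by norm_num)).clm_apply contDiffOn_const
  have hdiffq := hdiffOf q (hqc.of_le (by norm_num))
  have hdiffDq := hdiffOf Dq hDqc
  have hDq_eq : ∀ x y, y ∈ Set.Ioo a b → Dq (x, y) = f1 (x, y) * e x := by
    intro x y hy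
    have h1 := hasDerivAt_sliceY q x y (hdiffq x y hy)
    have h2 : HasDerivAt (fun Y => q (x, Y)) (f1 (x, y) * e x) y :=
      (hasDerivAt_sliceY p x y (hdiffp x y hy)).mul_const (e x)
    exact h1.unique h2
  have hD2q_eq : ∀ x y, y ∈ Set.Ioo a b → D2q (x, y) = f2 (x, y) * e x := by
    intro x y hy
    have hev : Dq =ᶠ[nhds ((x, y) : ℝ × ℝ)] fun z => f1 z * e z.1 := by
      filter_upwards [hU.mem_nhds (hmem x y hy)] with z hz
      simpa using hDq_eq z.1 z.2 hz.2
    have hprod_diff : DifferentiableAt ℝ (fun z : ℝ × ℝ => f1 z * e z.1) (x, y) :=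
      (hdifff1 x y hy).mul
        (((he_cd.comp contDiff_fst).differentiable (by norm_num)).differentiableAt)
    have h1 := hasDerivAt_sliceY (fun z => f1 z * e z.1) x y hprod_diff
    have h2 : HasDerivAt (fun Y => f1 (x, Y) * e x) (f2 (x, y) * e x) y :=
      (hasDerivAt_sliceY f1 x y (hdifff1 x y hy)).mul_const (e x)
    show fderiv ℝ Dq (x, y) (0, 1) = f2 (x, y) * e x
    rw [hev.fderiv_eq]
    exact h1.unique h2
  -- differentiate under the integral twice
  have hA1 : ∀ y ∈ Set.Ioo a b, HasDerivAt (fun Y => ∫ x in (0:ℝ)..Λ, q (x, Y))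
      (∫ x in (0:ℝ)..Λ, Dq (x, y)) y :=
    fun y hy => hasDerivAt_param_integral a b Λ q (hqc.of_le (by norm_num)) y hy
  have hA2 : ∀ y ∈ Set.Ioo a b, HasDerivAt (fun Y => ∫ x in (0:ℝ)..Λ, Dq (x, Y))
      (∫ x in (0:ℝ)..Λ, D2q (x, y)) y :=
    fun y hy => hasDerivAt_param_integral a b Λ Dq hDqc y hy
  have hphat_eq : phat n = fun Y => (1 / (Λ : ℂ)) * ∫ x in (0:ℝ)..Λ, q (x, Y) :=
    funext fun Y => hphat n Y
  have hder1 : ∀ y ∈ Set.Ioo a b, HasDerivAt (phat n)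
      ((1 / (Λ : ℂ)) * ∫ x in (0:ℝ)..Λ, Dq (x, y)) y := by
    intro y hy
    rw [hphat_eq]
    exact (hA1 y hy).const_mul _
  have hderiv_ev : deriv (phat n) =ᶠ[nhds y₀]
      fun y => (1 / (Λ : ℂ)) * ∫ x in (0:ℝ)..Λ, Dq (x, y) := by
    filter_upwards [isOpen_Ioo.mem_nhds hy₀] with y hy using (hder1 y hy).deriv
  have hder2 : HasDerivAt (fun y => (1 / (Λ : ℂ)) * ∫ x in (0:ℝ)..Λ, Dq (x, y))
      ((1 / (Λ : ℂ)) * ∫ x in (0:ℝ)..Λ, D2q (x, y₀)) y₀ := (hA2 y₀ hy₀).const_mul _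
  refine ⟨(hder1 y₀ hy₀).differentiableAt,
    (hderiv_ev.differentiableAt_iff).mpr hder2.differentiableAt, ?_⟩
  have hdd : deriv (deriv (phat n)) y₀ = (1 / (Λ : ℂ)) * ∫ x in (0:ℝ)..Λ, D2q (x, y₀) := by
    rw [hderiv_ev.deriv_eq, hder2.deriv]
  -- slice continuity helper
  have hcont_slice : ∀ (r : ℝ × ℝ → ℂ), ContinuousOn r (Set.univ ×ˢ Set.Ioo a b) →
      Continuous (fun x => r (x, y₀)) := fun r hr =>
    hr.comp_continuous (continuous_id.prodMk continuous_const) (fun x => hmem x y₀ hy₀)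
  have hg2cont : ContinuousOn g2 (Set.univ ×ˢ Set.Ioo a b) :=
    (hg1c.continuousOn_fderiv_of_isOpen hU le_rfl).clm_apply continuousOn_const
  have hpcont := hcont_slice p hp.continuousOn
  have hg1cont := hcont_slice g1 hg1c.continuousOn
  have hg2cont' := hcont_slice g2 hg2cont
  have hecont : Continuous e := he_cd.continuous
  -- x-derivatives of the slice
  have hux : ∀ x : ℝ, HasDerivAt (fun t => p (t, y₀)) (g1 (x, y₀)) x :=
    fun x => hasDerivAt_sliceX p x y₀ (hdiffp x y₀ hy₀)
  have hux2 : ∀ x : ℝ, HasDerivAt (fun t => g1 (t, y₀)) (g2 (x, y₀)) x :=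
    fun x => hasDerivAt_sliceX g1 x y₀ (hdiffg1 x y₀ hy₀)
  -- quasiperiodicity at the boundary
  set c : ℂ := Complex.exp (Complex.I * α * Λ) with hcdef
  have hbu : p (Λ, y₀) = c * p (0, y₀) := by simpa using hqp 0 y₀ hy₀
  have hbu' : g1 (Λ, y₀) = c * g1 (0, y₀) := by
    have hL : HasDerivAt (fun x => p (x + Λ, y₀)) (g1 (0 + Λ, y₀)) 0 :=
      (hux (0 + Λ)).comp_add_const 0 Λ
    have hR : HasDerivAt (fun x => c * p (x, y₀)) (c * g1 (0, y₀)) 0 :=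
      (hux 0).const_mul c
    have hfun : (fun x => p (x + Λ, y₀)) = fun x => c * p (x, y₀) :=
      funext fun x => hqp x y₀ hy₀
    have := (hfun ▸ hL).unique hR
    simpa using this
  have heΛc : e Λ * c = 1 := by
    rw [heval, hcdef, ← Complex.exp_add]
    have harg : m * (Λ : ℂ) + Complex.I * α * Λ
        = ((-n : ℤ) : ℂ) * (2 * Real.pi * Complex.I) := by
      rw [hmdef, hαn n]
      have hΛ' : (Λ : ℂ) ≠ 0 := by exact_mod_cast hΛ.ne'
      push_cast
      field_simp
      ring
    rw [harg, Complex.exp_int_mul_two_pi_mul_I]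
  have he0 : e 0 = 1 := by rw [heval]; simp
  -- integrability
  have hI1 : IntervalIntegrable (fun x => m * e x) volume 0 Λ :=
    (continuous_const.mul hecont).intervalIntegrable 0 Λ
  have hIu' : IntervalIntegrable (fun x => g1 (x, y₀)) volume 0 Λ :=
    hg1cont.intervalIntegrable 0 Λ
  have hIu'' : IntervalIntegrable (fun x => g2 (x, y₀)) volume 0 Λ :=
    hg2cont'.intervalIntegrable 0 Λ
  have hIep : IntervalIntegrable (fun x => e x * p (x, y₀)) volume 0 Λ :=
    (hecont.mul hpcont).intervalIntegrable 0 Λ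
  have hIeg2 : IntervalIntegrable (fun x => e x * g2 (x, y₀)) volume 0 Λ :=
    (hecont.mul hg2cont').intervalIntegrable 0 Λ
  -- integration by parts, twice
  have hpull : (∫ x in (0:ℝ)..Λ, (m * e x) * p (x, y₀))
      = m * ∫ x in (0:ℝ)..Λ, e x * p (x, y₀) := by
    simp only [mul_assoc]
    exact intervalIntegral.integral_const_mul _ _
  have hpull2 : (∫ x in (0:ℝ)..Λ, (m * e x) * g1 (x, y₀))
      = m * ∫ x in (0:ℝ)..Λ, e x * g1 (x, y₀) := by
    simp only [mul_assoc]
    exact intervalIntegral.integral_const_mul _ _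
  have step2 : (∫ x in (0:ℝ)..Λ, e x * g1 (x, y₀))
      = - (m * ∫ x in (0:ℝ)..Λ, e x * p (x, y₀)) := by
    have h := intervalIntegral.integral_mul_deriv_eq_deriv_mul
      (u := e) (v := fun t => p (t, y₀)) (u' := fun x => m * e x)
      (v' := fun x => g1 (x, y₀))
      (fun x _ => he x) (fun x _ => hux x) hI1 hIu'
    rw [h, hbu, he0, hpull, ← mul_assoc, heΛc]
    ring
  have step1 : (∫ x in (0:ℝ)..Λ, e x * g2 (x, y₀))
      = m * m * ∫ x in (0:ℝ)..Λ, e x * p (x, y₀) := by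
    have h := intervalIntegral.integral_mul_deriv_eq_deriv_mul
      (u := e) (v := fun t => g1 (t, y₀)) (u' := fun x => m * e x)
      (v' := fun x => g2 (x, y₀))
      (fun x _ => he x) (fun x _ => hux2 x) hI1 hIu''
    rw [h, hbu', he0, hpull2, step2, ← mul_assoc, heΛc]
    ring
  -- assemble
  have hint : (∫ x in (0:ℝ)..Λ, D2q (x, y₀))
      = ∫ x in (0:ℝ)..Λ, (-(e x * g2 (x, y₀)) - (κ : ℂ) ^ 2 * (e x * p (x, y₀))) := by
    apply intervalIntegral.integral_congr
    intro x hx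
    show D2q (x, y₀) = -(e x * g2 (x, y₀)) - (κ : ℂ) ^ 2 * (e x * p (x, y₀))
    rw [hD2q_eq x y₀ hy₀, hHelm' x y₀ hy₀]
    ring
  have hsplit : (∫ x in (0:ℝ)..Λ, (-(e x * g2 (x, y₀)) - (κ : ℂ) ^ 2 * (e x * p (x, y₀))))
      = -(∫ x in (0:ℝ)..Λ, e x * g2 (x, y₀))
        - (κ : ℂ) ^ 2 * ∫ x in (0:ℝ)..Λ, e x * p (x, y₀) := by
    have hneg : IntervalIntegrable (fun x => -(e x * g2 (x, y₀))) volume 0 Λ :=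
      ((hecont.mul hg2cont').neg).intervalIntegrable 0 Λ
    have hcm : IntervalIntegrable (fun x => (κ : ℂ) ^ 2 * (e x * p (x, y₀))) volume 0 Λ :=
      (continuous_const.mul (hecont.mul hpcont)).intervalIntegrable 0 Λ
    rw [intervalIntegral.integral_sub hneg hcm,
      intervalIntegral.integral_neg, intervalIntegral.integral_const_mul]
  have hphat_val : phat n y₀ = (1 / (Λ : ℂ)) * ∫ x in (0:ℝ)..Λ, e x * p (x, y₀) := by
    rw [hphat n y₀]
    congr 1
    apply intervalIntegral.integral_congr
    intro x hx
    exact mul_comm _ _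
  rw [hdd, hint, hsplit, step1, hm2, hphat_val]
  ring
end
end

section
/- Let Λ > 0, κ > 0, α ∈ ℝ, αₙ = α + 2πn/Λ, and βₙ = √(κ² − αₙ²) if |αₙ| < κ and βₙ = i √(αₙ² − κ²) if |αₙ| > κ, with κ ≠ |αₙ| for all n ∈ ℤ. Then for all x, s ∈ ℝ and all y ≠ t, the family ((1/βₙ) e^{i αₙ (x − s) + i βₙ |y − t|})_{n ∈ ℤ} is absolutely summable, so the quasi-periodic Green function G(x, y; s, t) = (i/(2Λ)) Σ_{n ∈ ℤ} (1/βₙ) e^{i αₙ (x − s) + i βₙ |y − t|} is well defined for (x, y) ≠ (s, t) with y ≠ t. -/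
noncomputable section

/-- The quasi-periodic frequencies `αₙ = α + 2πn/Λ`. -/
def αq (Λ α : ℝ) (n : ℤ) : ℝ := α + 2 * Real.pi * n / Λ

/-- The Rayleigh exponents: `βₙ = √(κ² − αₙ²)` if `|αₙ| < κ`,
and `βₙ = i√(αₙ² − κ²)` if `|αₙ| > κ`. -/
def βq (Λ κ α : ℝ) (n : ℤ) : ℂ :=
  if |αq Λ α n| < κ then ((Real.sqrt (κ ^ 2 - (αq Λ α n) ^ 2) : ℝ) : ℂ)
  else Complex.I * ((Real.sqrt ((αq Λ α n) ^ 2 - κ ^ 2) : ℝ) : ℂ)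

/-- the series defining the quasi-periodic Green function converges absolutely
for `y ≠ t`, so `G(x,y;s,t) = (i/(2Λ)) Σₙ (1/βₙ) e^{iαₙ(x−s)+iβₙ|y−t|}` is well defined. -/
theorem green_function_series_abs_summable (Λ κ α : ℝ) (hΛ : 0 < Λ) (hκ : 0 < κ)
    (hWood : ∀ n : ℤ, κ ≠ |αq Λ α n|) :
    ∀ x s y t : ℝ, y ≠ t →
      Summable (fun n : ℤ =>
        ‖(1 / βq Λ κ α n) * Complex.exp (Complex.I * (αq Λ α n : ℝ) * ((x : ℂ) - (s : ℂ))
          + Complex.I * βq Λ κ α n * (|y - t| : ℝ))‖) := by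
  intro x s y t hyt
  set d : ℝ := |y - t| with hd
  have hd0 : 0 < d := abs_pos.mpr (sub_ne_zero.mpr hyt)
  have hπ : (0:ℝ) < Real.pi := Real.pi_pos
  set r : ℝ := Real.exp (-(Real.pi * d / Λ)) with hr
  have hr0 : 0 ≤ r := (Real.exp_pos _).le
  have hr1 : r < 1 := by
    rw [hr, Real.exp_lt_one_iff]
    have : 0 < Real.pi * d / Λ := by positivity
    linarith
  -- summable geometric majorant over ℤ
  have hgeo : Summable (fun k : ℕ => r ^ k) := summable_geometric_of_lt_one hr0 hr1
  have hg : Summable (fun n : ℤ => r ^ n.natAbs) := by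
    apply Summable.of_nat_of_neg
    · simpa using hgeo
    · simpa using hgeo
  apply Summable.of_norm_bounded_eventually hg
  -- the bad set is contained in a finite interval
  have key : ∀ n : ℤ, Real.pi * |(n:ℝ)| / Λ ≥ |α| + κ + 1 →
      ‖‖(1 / βq Λ κ α n) * Complex.exp (Complex.I * (αq Λ α n : ℝ) * ((x : ℂ) - (s : ℂ))
          + Complex.I * βq Λ κ α n * (d : ℝ))‖‖ ≤ r ^ n.natAbs := by
    intro n hn
    set a : ℝ := αq Λ α n with ha
    have habs : Real.pi * |(n:ℝ)| / Λ + κ + 1 ≤ |a| := by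
      have hu : 2 * Real.pi * (n:ℝ) / Λ = a - α := by rw [ha]; unfold αq; ring
      have h1 : 2 * Real.pi * |(n:ℝ)| / Λ ≤ |a| + |α| := by
        have habs2 : |2 * Real.pi * (n:ℝ) / Λ| = 2 * Real.pi * |(n:ℝ)| / Λ := by
          rw [abs_div, abs_of_pos hΛ, abs_mul, abs_of_pos (by positivity : (0:ℝ) < 2 * Real.pi)]
        rw [← habs2, hu]
        exact abs_sub a α
      ring_nf at hn h1 ⊢
      linarith
    have hsq : max ((Real.pi * |(n:ℝ)| / Λ) ^ 2) 1 ≤ a ^ 2 - κ ^ 2 := by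
      have h2 : (Real.pi * |(n:ℝ)| / Λ + κ + 1) ^ 2 ≤ |a| ^ 2 := by
        apply pow_le_pow_left₀ (by positivity) habs
      rw [max_le_iff]
      have hnn : 0 ≤ Real.pi * |(n:ℝ)| / Λ := by positivity
      constructor <;> nlinarith [sq_abs a]
    set b : ℝ := Real.sqrt (a ^ 2 - κ ^ 2) with hb
    have hb1 : 1 ≤ b := by
      rw [hb, show (1:ℝ) = Real.sqrt 1 by simp]
      exact Real.sqrt_le_sqrt (le_trans (le_max_right _ _) hsq)
    have hbn : Real.pi * |(n:ℝ)| / Λ ≤ b := by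
      rw [hb]
      have := Real.sqrt_le_sqrt (le_trans (le_max_left _ _) hsq)
      rwa [Real.sqrt_sq (by positivity)] at this
    have hb0 : 0 < b := lt_of_lt_of_le one_pos hb1
    have hβ : βq Λ κ α n = Complex.I * (b : ℂ) := by
      rw [βq, if_neg, ← ha, ← hb]
      rw [← ha, not_lt]
      nlinarith [abs_nonneg α]
    have hnorm : ‖(1 / βq Λ κ α n) * Complex.exp (Complex.I * (a : ℝ) * ((x : ℂ) - (s : ℂ))
        + Complex.I * βq Λ κ α n * (d : ℝ))‖ = (1 / b) * Real.exp (-(b * d)) := by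
      rw [hβ, norm_mul]
      congr 1
      · simp [norm_div, Complex.norm_I, abs_of_pos hb0]
      · rw [Complex.norm_exp]
        congr 1
        simp [Complex.mul_re, Complex.add_re]
        try ring
    rw [norm_norm, hnorm]
    have h3 : (1 / b) * Real.exp (-(b * d)) ≤ Real.exp (-(b * d)) := by
      have : 1 / b ≤ 1 := by
        rw [div_le_one hb0]; exact hb1
      nlinarith [Real.exp_pos (-(b*d))]
    have h4 : Real.exp (-(b * d)) ≤ r ^ n.natAbs := by
      have hnat : |(n:ℝ)| = (n.natAbs : ℝ) := by
        simp [Nat.cast_natAbs, Int.cast_abs]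
      rw [hr, ← Real.exp_nat_mul]
      apply Real.exp_le_exp.mpr
      have : Real.pi * d / Λ * (n.natAbs : ℝ) ≤ b * d := by
        have := mul_le_mul_of_nonneg_right hbn hd0.le
        calc Real.pi * d / Λ * (n.natAbs : ℝ) = Real.pi * |(n:ℝ)| / Λ * d := by
              rw [hnat]; ring
          _ ≤ b * d := this
      linarith
    linarith
  rw [Filter.eventually_cofinite]
  apply Set.Finite.subset (Set.finite_Icc (-(⌈Λ * (|α| + κ + 1) / Real.pi⌉) ) ⌈Λ * (|α| + κ + 1) / Real.pi⌉)
  intro n hn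
  simp only [Set.mem_setOf_eq] at hn
  by_contra hmem
  apply hn
  apply key
  -- from ¬ n ∈ Icc, get |n| large
  simp only [Set.mem_Icc, not_and_or, not_le] at hmem
  have hN : (⌈Λ * (|α| + κ + 1) / Real.pi⌉ : ℝ) ≤ |(n:ℝ)| := by
    have hceil : Λ * (|α| + κ + 1) / Real.pi ≤ (⌈Λ * (|α| + κ + 1) / Real.pi⌉ : ℝ) := Int.le_ceil _
    rcases hmem with h | h
    · have : (n:ℝ) < -(⌈Λ * (|α| + κ + 1) / Real.pi⌉ : ℝ) := by exact_mod_cast (by push_cast; exact_mod_cast h : (n:ℝ) < ((-⌈Λ * (|α| + κ + 1) / Real.pi⌉ : ℤ) : ℝ))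
      rw [abs_of_nonpos (by nlinarith [hceil, Real.pi_pos, mul_nonneg hΛ.le (by positivity : (0:ℝ) ≤ |α| + κ + 1), div_nonneg (mul_nonneg hΛ.le (by positivity : (0:ℝ) ≤ |α| + κ + 1)) Real.pi_pos.le] : (n:ℝ) ≤ 0)]
      linarith
    · have : (⌈Λ * (|α| + κ + 1) / Real.pi⌉ : ℝ) < (n:ℝ) := by exact_mod_cast h
      calc (⌈Λ * (|α| + κ + 1) / Real.pi⌉ : ℝ) ≤ (n:ℝ) := this.le
        _ ≤ |(n:ℝ)| := le_abs_self _
  have hceil : Λ * (|α| + κ + 1) / Real.pi ≤ |(n:ℝ)| :=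
    le_trans (Int.le_ceil _) hN
  rw [ge_iff_le, ← sub_nonneg]
  have : Λ * (|α| + κ + 1) ≤ Real.pi * |(n:ℝ)| := by
    rw [div_le_iff₀ Real.pi_pos] at hceil
    linarith [hceil]
  rw [div_sub' hΛ.ne']
  apply div_nonneg _ hΛ.le
  nlinarith
end
end
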